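/- Let u_h be a continuous piecewise linear finite element function on a simplicial triangulation 𝒯 = {T_1,…,T_m} of a domain Ω ⊆ ℝ^d with nodal values u ∈ ℝ^N, and let w_u ∈ ℝ^m be defined by (w_u)_i := sum of |u_j| over all nodes j that are vertices of T_i. Then the Lebesgue measure of the support of u_h equals Σ_{i : (w_u)_i ≠ 0} μ(T_i); consequently, for K ∈ (0, μ(Ω)), ‖u_h‖_0 ≤ K if and only if ‖w_u‖_{1,μ(𝒯)} − |w_u|_{K,μ(𝒯)} = 0, where ‖w‖_{1,μ(𝒯)} := Σ_i μ(T_i)|w_i| and |w|_{K,μ(𝒯)} := max { Σ_{i∈I} μ(T_i)|w_i| : I ⊆ {1,…,m}, Σ_{i∈I} μ(T_i) ≤ K }. -/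

import Mathlib

open MeasureTheory Set
open scoped ENNReal

/-- let `𝒯 = {T₁,…,T_m}` be a simplicial mesh in `ℝ^d` (each `Tᵢ` the convex
hull of `d+1` affinely independent nodes, elements overlapping only in null sets), and let
`u_h` be continuous piecewise linear with nodal values `u`. With
`(w_u)ᵢ = Σ_{j vertex of Tᵢ} |u_j|`, the Lebesgue measure of the support of `u_h` (within
the mesh) equals `Σ_{i : (w_u)ᵢ ≠ 0} μ(Tᵢ)`; consequently, for `K ∈ (0, μ(Ω))`,
`‖u_h‖₀ ≤ K ↔ ‖w_u‖_{1,μ(𝒯)} − |w_u|_{K,μ(𝒯)} = 0`. -/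
theorem stmt18 (d m N : ℕ)
    (T : Fin m → Set (Fin d → ℝ))
    (p : Fin N → (Fin d → ℝ))
    (V : Fin m → Finset (Fin N))
    (hVcard : ∀ i, (V i).card = d + 1)
    (hT : ∀ i, T i = convexHull ℝ (p '' (V i : Set (Fin N))))
    (hindep : ∀ i, AffineIndependent ℝ (fun j : (V i : Set (Fin N)) => p j))
    (hdisj : ∀ i j, i ≠ j → volume (T i ∩ T j) = 0)
    (u : Fin N → ℝ) (uh : (Fin d → ℝ) → ℝ)
    (haff : ∀ i, ∃ g : (Fin d → ℝ) →ᵃ[ℝ] ℝ,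
      Set.EqOn uh g (T i) ∧ ∀ j ∈ V i, g (p j) = u j)
    (w : Fin m → ℝ) (hw : ∀ i, w i = ∑ j ∈ V i, |u j|)
    (K : ℝ) (hK0 : 0 < K) (hK : K < ∑ i, (volume (T i)).toReal) :
    volume ((⋃ i, T i) ∩ Function.support uh) =
      ∑ i ∈ Finset.univ.filter (fun i => w i ≠ 0), volume (T i) ∧
    (volume ((⋃ i, T i) ∩ Function.support uh) ≤ ENNReal.ofReal K ↔
      (∑ i, (volume (T i)).toReal * |w i|) -
        sSup {r : ℝ | ∃ I : Finset (Fin m),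
          (∑ i ∈ I, (volume (T i)).toReal) ≤ K ∧
          r = ∑ i ∈ I, (volume (T i)).toReal * |w i|} = 0) := by
  classical
  choose g hg hgv using haff
  -- basic properties of the elements
  have hcomp : ∀ i, IsCompact (T i) := by
    intro i
    rw [hT i]
    exact (((V i).finite_toSet).image p).isCompact_convexHull ℝ
  have hmeas : ∀ i, MeasurableSet (T i) := fun i => (hcomp i).isClosed.measurableSet
  have hvfin : ∀ i, volume (T i) ≠ ⊤ := fun i => ((hcomp i).measure_lt_top).ne
  set A : Fin m → Set (Fin d → ℝ) := fun i => T i ∩ Function.support uh with hA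
  -- A i = T i minus zero set of g i
  have hAeq : ∀ i, A i = T i \ (g i) ⁻¹' {0} := by
    intro i
    ext x
    simp only [hA, Set.mem_inter_iff, Function.mem_support, Set.mem_diff,
      Set.mem_preimage, Set.mem_singleton_iff]
    constructor
    · rintro ⟨hx, hne⟩; exact ⟨hx, fun h0 => hne (by rw [(hg i) hx, h0])⟩
    · rintro ⟨hx, hne⟩; exact ⟨hx, fun h0 => hne (by rw [← (hg i) hx, h0])⟩
  -- if w i = 0 then A i = ∅
  have hAzero : ∀ i, w i = 0 → A i = ∅ := by
    intro i hwi
    have hu0 : ∀ j ∈ V i, u j = 0 := by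
      intro j hj
      have := (Finset.sum_eq_zero_iff_of_nonneg (fun j _ => abs_nonneg (u j))).1
        ((hw i) ▸ hwi) j hj
      exact abs_eq_zero.1 this
    have hsub : T i ⊆ (g i) ⁻¹' {0} := by
      rw [hT i]
      intro x hx
      have : g i x ∈ (g i) '' (convexHull ℝ (p '' (V i : Set (Fin N)))) :=
        Set.mem_image_of_mem _ hx
      rw [AffineMap.image_convexHull] at this
      have himg : (g i) '' (p '' (V i : Set (Fin N))) ⊆ {0} := by
        rintro y ⟨z, ⟨j, hj, rfl⟩, rfl⟩
        simp [hgv i j hj, hu0 j hj]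
      have := convexHull_min himg (convex_singleton (0 : ℝ)) this
      simpa using this
    rw [hAeq i, Set.diff_eq_empty.2 hsub]
  -- if w i ≠ 0 then the zero set of g i is null
  have hnull : ∀ i, w i ≠ 0 → volume ((g i) ⁻¹' {0}) = 0 := by
    intro i hwi
    obtain ⟨j, hj, huj⟩ : ∃ j ∈ V i, u j ≠ 0 := by
      by_contra h
      push_neg at h
      exact hwi (by rw [hw i]; exact Finset.sum_eq_zero fun j hj => by simp [h j hj])
    have hgpj : g i (p j) ≠ 0 := by rw [hgv i j hj]; exact huj
    set s : AffineSubspace ℝ (Fin d → ℝ) :=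
      (AffineSubspace.mk' (0 : ℝ) (⊥ : Submodule ℝ ℝ)).comap (g i) with hs
    have hcarrier : ((g i) ⁻¹' {0} : Set (Fin d → ℝ)) = (s : Set (Fin d → ℝ)) := by
      ext x
      simp [hs, AffineSubspace.mem_comap, AffineSubspace.mem_mk',
        Submodule.mem_bot, sub_eq_zero]
    have hne : s ≠ ⊤ := by
      intro htop
      apply hgpj
      have : p j ∈ s := htop ▸ AffineSubspace.mem_top ℝ _ _
      rw [AffineSubspace.mem_comap, AffineSubspace.mem_mk'] at this
      simpa using this
    rw [hcarrier]
    exact Measure.addHaar_affineSubspace volume s hne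
  -- measure of each piece
  have hApiece : ∀ i, volume (A i) = if w i ≠ 0 then volume (T i) else 0 := by
    intro i
    by_cases hwi : w i = 0
    · simp [hwi, hAzero i hwi]
    · rw [if_pos hwi, hAeq i, measure_diff_null (hnull i hwi)]
  -- null measurability and a.e. disjointness
  have hAnm : ∀ i, NullMeasurableSet (A i) volume := by
    intro i
    rw [hAeq i]
    have hgc : Continuous (g i) := (g i).continuous_of_finiteDimensional
    exact ((hmeas i).diff ((isClosed_singleton.preimage hgc).measurableSet)).nullMeasurableSet
  have hAdisj : Pairwise (Function.onFun (AEDisjoint volume) A) := by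
    intro i j hij
    exact measure_mono_null (Set.inter_subset_inter inter_subset_left inter_subset_left)
      (hdisj i j hij)
  -- part 1
  have hpart1 : volume ((⋃ i, T i) ∩ Function.support uh) =
      ∑ i ∈ Finset.univ.filter (fun i => w i ≠ 0), volume (T i) := by
    have h1 : (⋃ i, T i) ∩ Function.support uh = ⋃ i, A i := by
      rw [Set.iUnion_inter]
    rw [h1, measure_iUnion₀ hAdisj (fun i => hAnm i), tsum_fintype]
    rw [Finset.sum_filter]
    exact Finset.sum_congr rfl fun i _ => by rw [hApiece i]
  refine ⟨hpart1, ?_⟩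
  -- part 2
  set μr : Fin m → ℝ := fun i => (volume (T i)).toReal with hμr
  set t : Fin m → ℝ := fun i => μr i * |w i| with hts
  set S : Finset (Fin m) := Finset.univ.filter (fun i => w i ≠ 0) with hS
  have hμr0 : ∀ i, 0 ≤ μr i := fun i => ENNReal.toReal_nonneg
  have ht0 : ∀ i, 0 ≤ t i := fun i => mul_nonneg (hμr0 i) (abs_nonneg _)
  have htS : ∀ i ∉ S, t i = 0 := by
    intro i hi
    simp only [hS, Finset.mem_filter, Finset.mem_univ, true_and, not_not] at hi
    simp [hts, hi]
  set total : ℝ := ∑ i, t i with htotal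
  set R : Set ℝ := {r : ℝ | ∃ I : Finset (Fin m),
      (∑ i ∈ I, μr i) ≤ K ∧ r = ∑ i ∈ I, t i} with hR
  -- LHS iff
  have hsumfin : (∑ i ∈ S, volume (T i)) ≠ ⊤ :=
    (ENNReal.sum_lt_top.2 fun i _ => (hvfin i).lt_top).ne
  have hLHS : volume ((⋃ i, T i) ∩ Function.support uh) ≤ ENNReal.ofReal K ↔
      (∑ i ∈ S, μr i) ≤ K := by
    rw [hpart1]
    rw [ENNReal.le_ofReal_iff_toReal_le hsumfin hK0.le, ENNReal.toReal_sum
      (fun i _ => hvfin i)]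
  -- facts about R
  have hRne : R.Nonempty := ⟨0, ⟨∅, by simp [hK0.le]⟩⟩
  have hRub : ∀ r ∈ R, r ≤ total := by
    rintro r ⟨I, hI, rfl⟩
    exact Finset.sum_le_sum_of_subset_of_nonneg (Finset.subset_univ I)
      (fun i _ _ => ht0 i)
  have hRbdd : BddAbove R := ⟨total, fun r hr => hRub r hr⟩
  have hRfin : R.Finite := by
    apply Set.Finite.subset (Set.finite_range fun I : Finset (Fin m) => ∑ i ∈ I, t i)
    rintro r ⟨I, _, rfl⟩
    exact ⟨I, rfl⟩
  have htotalS : total = ∑ i ∈ S, t i := by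
    rw [htotal]
    exact (Finset.sum_subset (Finset.subset_univ S) fun i _ hi => htS i hi).symm
  rw [hLHS]
  constructor
  · intro h
    have hmem : total ∈ R := ⟨S, h, htotalS⟩
    have h1 : total ≤ sSup R := le_csSup hRbdd hmem
    have h2 : sSup R ≤ total := csSup_le hRne hRub
    linarith [le_antisymm h2 h1]
  · intro h
    have hsup : sSup R = total := by linarith
    have hmem : sSup R ∈ R := hRne.csSup_mem hRfin
    rw [hsup] at hmem
    obtain ⟨I, hIK, hIt⟩ := hmem
    -- t i = 0 off I
    have hoff : ∀ i ∉ I, t i = 0 := by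
      have hsplit : ∑ i ∈ Finset.univ \ I, t i + ∑ i ∈ I, t i = total :=
        Finset.sum_sdiff (Finset.subset_univ I)
      have hzero : ∑ i ∈ Finset.univ \ I, t i = 0 := by linarith [hIt ▸ hsplit]
      intro i hi
      exact (Finset.sum_eq_zero_iff_of_nonneg fun j _ => ht0 j).1 hzero i
        (Finset.mem_sdiff.2 ⟨Finset.mem_univ i, hi⟩)
    -- μr i = 0 for i ∈ S \ I
    have hμzero : ∀ i ∈ S \ I, μr i = 0 := by
      intro i hi
      rw [Finset.mem_sdiff] at hi
      have hwi : w i ≠ 0 := by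
        have := hi.1
        simp only [hS, Finset.mem_filter, Finset.mem_univ, true_and] at this
        exact this
      have := hoff i hi.2
      rw [hts] at this
      rcases mul_eq_zero.1 this with h | h
      · exact h
      · exact absurd (abs_eq_zero.1 h) hwi
    calc ∑ i ∈ S, μr i ≤ ∑ i ∈ S ∪ I, μr i :=
          Finset.sum_le_sum_of_subset_of_nonneg Finset.subset_union_left
            (fun i _ _ => hμr0 i)
      _ = ∑ i ∈ (S ∪ I) \ I, μr i + ∑ i ∈ I, μr i :=
          (Finset.sum_sdiff Finset.subset_union_right).symm
      _ = 0 + ∑ i ∈ I, μr i := by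
          congr 1
          apply Finset.sum_eq_zero
          intro i hi
          rw [Finset.mem_sdiff, Finset.mem_union] at hi
          rcases hi.1 with h | h
          · exact hμzero i (Finset.mem_sdiff.2 ⟨h, hi.2⟩)
          · exact absurd h hi.2
      _ ≤ K := by simpa using hIK
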